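/- arXiv:0909.4639 — 3 statements merged into one kernel-verified Lean document; each statement's English description precedes it below -/
import Mathlib

section
/- Let G be a finite group with normal subgroups N ⊴ G and a subgroup L ≤ G with NL = G. If Q/R is a section of G with Q ≤ L, R ⊴ Q, and Q/R simple non-abelian, then either Q/R is isomorphic to a section of G/N or Q/R is isomorphic to a section of L ∩ N. -/
/-- `S` is (isomorphic to) a section of `H`, i.e. a quotient `Q/R` with `R ⊴ Q ≤ H`. -/
def IsSectionOf (S H : Type*) [Group S] [Group H] : Prop :=
  ∃ (Q : Subgroup H) (φ : Q →* S), Function.Surjective φ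

/-- If `N ⊴ G`, `L ≤ G` with `NL = G`, and `Q/R` is a non-abelian simple section of `G`
with `Q ≤ L`, then `Q/R` is isomorphic to a section of `G/N` or to a section of `L ∩ N`. -/
theorem simple_section_of_sup {G : Type*} [Group G] [Finite G]
    (N : Subgroup G) [N.Normal] (L : Subgroup G) (hNL : N ⊔ L = ⊤)
    (Q : Subgroup G) (hQL : Q ≤ L) (R : Subgroup Q) [R.Normal]
    (hsimple : IsSimpleGroup (Q ⧸ R)) (hnonab : ¬ ∀ a b : Q ⧸ R, a * b = b * a) :
    IsSectionOf (Q ⧸ R) (G ⧸ N) ∨ IsSectionOf (Q ⧸ R) ↥(L ⊓ N) := by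
  -- `K` is `Q ∩ N` viewed as a subgroup of `Q`; it is normal in `Q`.
  set K : Subgroup Q := N.subgroupOf Q with hK
  haveI : K.Normal := Subgroup.normal_subgroupOf
  -- Its image in `Q ⧸ R` is normal, hence trivial or everything.
  have hnorm : (K.map (QuotientGroup.mk' R)).Normal :=
    Subgroup.Normal.map ‹K.Normal› _ (QuotientGroup.mk'_surjective R)
  rcases hsimple.eq_bot_or_eq_top_of_normal _ hnorm with h | h
  · -- image trivial: `Q/R` is a section of `G/N`.
    left
    set g : Q →* G ⧸ N := (QuotientGroup.mk' N).comp Q.subtype with hg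
    have hker : g.ker ≤ (QuotientGroup.mk' R).ker := by
      intro x hx
      have hxK : x ∈ K := by
        have : (x : G) ∈ N := by
          simpa [hg, QuotientGroup.eq_one_iff] using hx
        simpa [hK, Subgroup.mem_subgroupOf] using this
      exact (Subgroup.map_eq_bot_iff K).mp h hxK
    refine ⟨g.range,
      (QuotientGroup.lift g.ker (QuotientGroup.mk' R) hker).comp
        (QuotientGroup.quotientKerEquivRange g).symm.toMonoidHom, ?_⟩
    have h1 : Function.Surjective (QuotientGroup.lift g.ker (QuotientGroup.mk' R) hker) := by
      intro y
      obtain ⟨q, rfl⟩ := QuotientGroup.mk'_surjective R y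
      exact ⟨QuotientGroup.mk q, rfl⟩
    simpa [MonoidHom.coe_comp] using
      h1.comp (QuotientGroup.quotientKerEquivRange g).symm.surjective
  · -- image everything: `Q/R` is a section of `L ⊓ N`.
    right
    set S : Subgroup ↥(L ⊓ N) := (Q ⊓ N).subgroupOf (L ⊓ N) with hS
    have hmem : ∀ x : S, (x : ↥(L ⊓ N)).1 ∈ Q := fun x => x.2.1
    refine ⟨S, (QuotientGroup.mk' R).comp
      { toFun := fun x => ⟨(x : ↥(L ⊓ N)).1, x.2.1⟩
        map_one' := rfl
        map_mul' := fun _ _ => rfl }, ?_⟩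
    intro y
    have hy : y ∈ K.map (QuotientGroup.mk' R) := h ▸ Subgroup.mem_top y
    obtain ⟨k, hkK, hk⟩ := hy
    have hkN : (k : G) ∈ N := by simpa [hK, Subgroup.mem_subgroupOf] using hkK
    refine ⟨⟨⟨(k : G), hQL k.2, hkN⟩, ?_⟩, ?_⟩
    · exact Subgroup.mem_subgroupOf.mpr ⟨k.2, hkN⟩
    · simpa using hk
end

section
/- Let G be a finite group, K ⊴ G a normal subgroup, and suppose G = K⟨S⟩ for some subset S of G. Then there is a subset W ⊆ S with |W| ≤ log₂|G : K| such that G = K⟨W⟩. -/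
private lemma aux_small_gen {G : Type*} [Group G] [Finite G] :
    ∀ (n : ℕ) (K : Subgroup G) (S : Set G), K.index = n →
      K ⊔ Subgroup.closure S = ⊤ →
      ∃ W : Finset G, (W : Set G) ⊆ S ∧ 2 ^ W.card ≤ K.index ∧
        K ⊔ Subgroup.closure (W : Set G) = ⊤ := by
  intro n
  haveI := Classical.decEq G
  induction n using Nat.strong_induction_on with
  | _ n ih =>
    intro K S hn hS
    by_cases hK : K = ⊤
    · refine ⟨∅, by simp, ?_, by simp [hK]⟩
      simpa using Nat.one_le_iff_ne_zero.2 K.index_ne_zero_of_finite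
    · obtain ⟨s, hsS, hsK⟩ : ∃ s ∈ S, s ∉ K := by
        by_contra h
        push_neg at h
        exact hK (by rw [← hS, sup_eq_left.2 ((Subgroup.closure_le K).2 h)])
      set K' : Subgroup G := K ⊔ Subgroup.closure {s} with hK'
      have hle : K ≤ K' := le_sup_left
      have hsK' : s ∈ K' := Subgroup.mem_sup_right (Subgroup.subset_closure rfl)
      have hmul : K.relIndex K' * K'.index = K.index := Subgroup.relIndex_mul_index hle
      have hr0 : K.relIndex K' ≠ 0 := (by rw [Subgroup.relIndex]; exact Subgroup.index_ne_zero_of_finite)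
      have hr1 : K.relIndex K' ≠ 1 := by
        intro h
        exact hsK (Subgroup.relIndex_eq_one.mp h hsK')
      have hr2 : 2 ≤ K.relIndex K' := by omega
      have hI0 : K'.index ≠ 0 := K'.index_ne_zero_of_finite
      have hlt : K'.index < K.index := by
        have : 2 * K'.index ≤ K.relIndex K' * K'.index :=
          Nat.mul_le_mul_right _ hr2
        omega
      have hS' : K' ⊔ Subgroup.closure S = ⊤ := by
        rw [eq_top_iff, ← hS]
        exact sup_le_sup_right hle _
      obtain ⟨W', hW'S, hW'card, hW'top⟩ := ih K'.index (hn ▸ hlt) K' S rfl hS'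
      refine ⟨insert s W', ?_, ?_, ?_⟩
      · intro x hx
        simp only [Finset.coe_insert, Set.mem_insert_iff] at hx
        rcases hx with rfl | hx
        · exact hsS
        · exact hW'S hx
      · calc 2 ^ (insert s W').card ≤ 2 ^ (W'.card + 1) :=
              Nat.pow_le_pow_right (by norm_num) (Finset.card_insert_le _ _)
          _ = 2 * 2 ^ W'.card := by ring
          _ ≤ 2 * K'.index := Nat.mul_le_mul_left _ hW'card
          _ ≤ K.relIndex K' * K'.index := Nat.mul_le_mul_right _ hr2
          _ = K.index := hmul
      · have : Subgroup.closure ((insert s W' : Finset G) : Set G) =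
            Subgroup.closure {s} ⊔ Subgroup.closure (W' : Set G) := by
          rw [Finset.coe_insert, ← Set.singleton_union, Subgroup.closure_union]
        rw [this, ← sup_assoc]
        exact hW'top

/-- If `G = K⟨S⟩` with `K ⊴ G`, then there is `W ⊆ S` with `|W| ≤ log₂ |G : K|`
such that `G = K⟨W⟩`. -/
theorem exists_small_generating_subset {G : Type*} [Group G] [Finite G]
    (K : Subgroup G) [K.Normal] (S : Set G)
    (hS : K ⊔ Subgroup.closure S = ⊤) :
    ∃ W : Finset G, (W : Set G) ⊆ S ∧ W.card ≤ Nat.log 2 K.index ∧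
      K ⊔ Subgroup.closure (W : Set G) = ⊤ := by
  obtain ⟨W, hWS, hWcard, hWtop⟩ := aux_small_gen K.index K S rfl hS
  exact ⟨W, hWS, (Nat.le_log_iff_pow_le one_lt_two K.index_ne_zero_of_finite).mpr hWcard, hWtop⟩
end

section
/- Gaschütz's lemma (extended form): Let G be a finite group, N ⊴ G, X ⊆ G, and y₁,...,y_n ∈ G with G = N⟨X, y₁,...,y_n⟩, where n ≥ d(G) (the minimal number of generators of G). Then there exist a₁,...,a_n ∈ N such that G = ⟨X, a₁y₁, ..., a_n y_n⟩. -/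
open Subgroup Finset Pointwise

open scoped Classical in
/-- Number of tuples `a ∈ Nⁿ` with `⟨X, a₁y₁,…⟩ = H`. -/
noncomputable def gcnt {G : Type*} [Group G] [Fintype G] (N : Subgroup G) (X : Set G)
    {n : ℕ} (H : Subgroup G) (y : Fin n → G) : ℕ :=
  (Finset.univ.filter (fun a : Fin n → G =>
    (∀ i, a i ∈ N) ∧ Subgroup.closure (X ∪ Set.range (fun i => a i * y i)) = H)).card

section Aux
variable {G : Type*} [Group G] [Fintype G] (N : Subgroup G) (X : Set G) {n : ℕ}

open scoped Classical

lemma gcnt_eq_zero [N.Normal] (y : Fin n → G)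
    (hy : N ⊔ Subgroup.closure (X ∪ Set.range y) = ⊤)
    (K : Subgroup G) (h : ¬(X ⊆ K ∧ N ⊔ K = ⊤)) : gcnt N X K y = 0 := by
  rw [gcnt, Finset.card_eq_zero, Finset.filter_eq_empty_iff]
  rintro a _ ⟨ha, hcl⟩
  apply h
  have hXK : X ⊆ K := hcl ▸ (Set.subset_union_left).trans Subgroup.subset_closure
  refine ⟨hXK, ?_⟩
  have hle : Subgroup.closure (X ∪ Set.range y) ≤ N ⊔ K := by
    apply Subgroup.closure_le _ |>.2
    rintro x (hx | ⟨i, rfl⟩)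
    · exact (le_sup_right : K ≤ N ⊔ K) (hXK hx)
    · have h1 : a i * y i ∈ K := by
        rw [← hcl]
        exact Subgroup.subset_closure (Set.mem_union_right _ ⟨i, rfl⟩)
      have hyi : y i = (a i)⁻¹ * (a i * y i) := by group
      rw [hyi]
      exact mul_mem ((le_sup_left : N ≤ N ⊔ K) (inv_mem (ha i)))
        ((le_sup_right : K ≤ N ⊔ K) h1)
  rw [eq_top_iff, ← hy]
  exact sup_le le_sup_left (hle.trans (sup_le le_sup_left le_sup_right))

omit [Fintype G] in
lemma gcnt_factor [N.Normal] (H : Subgroup G) (hHN : N ⊔ H = ⊤) (g : G) :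
    Nat.card {b : G // b ∈ N ∧ b * g ∈ H} = Nat.card (H ⊓ N : Subgroup G) := by
  have hg : g ∈ (N : Set G) * (H : Set G) := by
    rw [← Subgroup.normal_mul, hHN]; simp
  obtain ⟨n₀, hn₀, h, hh, rfl⟩ := hg
  have hn₀' : n₀ ∈ N := hn₀
  have hh' : h ∈ H := hh
  apply Nat.card_congr
  refine ⟨fun b => ⟨b.1 * n₀, Subgroup.mem_inf.2 ⟨?_, ?_⟩⟩,
    fun c => ⟨c.1 * n₀⁻¹, ?_, ?_⟩, fun b => Subtype.ext ?_, fun c => Subtype.ext ?_⟩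
  · have he : (b.1 * n₀ : G) = (b.1 * (n₀ * h)) * h⁻¹ := by group
    exact he ▸ mul_mem b.2.2 (inv_mem hh')
  · exact mul_mem b.2.1 hn₀'
  · exact mul_mem ((Subgroup.mem_inf.1 c.2).2) (inv_mem hn₀')
  · have he : (c.1 * n₀⁻¹ * (n₀ * h) : G) = c.1 * h := by group
    rw [he]; exact mul_mem (Subgroup.mem_inf.1 c.2).1 hh'
  · simp
  · simp

lemma gcnt_box [N.Normal] (H : Subgroup G) (hHN : N ⊔ H = ⊤) (y : Fin n → G) :
    (Finset.univ.filter (fun a : Fin n → G =>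
      (∀ i, a i ∈ N) ∧ ∀ i, a i * y i ∈ H)).card = Nat.card (H ⊓ N : Subgroup G) ^ n := by
  have h1 : (Finset.univ.filter (fun a : Fin n → G =>
      (∀ i, a i ∈ N) ∧ ∀ i, a i * y i ∈ H)).card
      = Nat.card {a : Fin n → G // ∀ i, a i ∈ N ∧ a i * y i ∈ H} := by
    rw [Nat.card_eq_fintype_card, Fintype.card_subtype]
    congr 1
    apply Finset.filter_congr
    intro a _
    simp [forall_and]
  have h2 : Nat.card {a : Fin n → G // ∀ i, a i ∈ N ∧ a i * y i ∈ H}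
      = ∏ i : Fin n, Nat.card {b : G // b ∈ N ∧ b * y i ∈ H} := by
    rw [Nat.card_congr (Equiv.subtypePiEquivPi (p := fun i (b : G) => b ∈ N ∧ b * y i ∈ H)),
      Nat.card_pi]
  rw [h1, h2, Finset.prod_congr rfl (fun i _ => gcnt_factor N H hHN (y i))]
  simp

lemma gcnt_sum (H : Subgroup G) (hX : X ⊆ H) (y : Fin n → G) :
    ∑ K ∈ Finset.univ.filter (· ≤ H), gcnt N X K y
      = (Finset.univ.filter (fun a : Fin n → G =>
          (∀ i, a i ∈ N) ∧ ∀ i, a i * y i ∈ H)).card := by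
  rw [Finset.card_eq_sum_card_fiberwise
    (f := fun a : Fin n → G => Subgroup.closure (X ∪ Set.range (fun i => a i * y i)))
    (t := Finset.univ.filter (· ≤ H))]
  · apply Finset.sum_congr rfl
    intro K hK
    rw [Finset.mem_filter] at hK
    rw [gcnt, Finset.filter_filter]
    congr 1
    apply Finset.filter_congr
    intro a _
    constructor
    · intro h
      refine ⟨⟨h.1, fun i => hK.2 ?_⟩, h.2⟩
      rw [← h.2]
      exact Subgroup.subset_closure (Set.mem_union_right _ ⟨i, rfl⟩)
    · intro h; exact ⟨h.1.1, h.2⟩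
  · intro a ha
    rw [Finset.mem_coe, Finset.mem_filter] at ha
    rw [Finset.mem_coe, Finset.mem_filter]
    refine ⟨Finset.mem_univ _, (Subgroup.closure_le _).2 ?_⟩
    rintro x (hx | ⟨i, rfl⟩)
    · exact hX hx
    · exact ha.2.2 i

lemma gcnt_key [N.Normal] (y y' : Fin n → G)
    (hy : N ⊔ Subgroup.closure (X ∪ Set.range y) = ⊤)
    (hy' : N ⊔ Subgroup.closure (X ∪ Set.range y') = ⊤)
    (H : Subgroup G) (hXH : X ⊆ H) (hHN : N ⊔ H = ⊤) :
    gcnt N X H y = gcnt N X H y' := by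
  induction H using WellFoundedLT.induction with
  | _ H IH =>
  have hsplit : (Finset.univ.filter (· ≤ H))
      = insert H (Finset.univ.filter (· < H)) := by
    ext K
    simp [le_iff_lt_or_eq, or_comm]
  have hnm : H ∉ Finset.univ.filter (· < H) := by simp
  have heq : ∀ z : Fin n → G, N ⊔ Subgroup.closure (X ∪ Set.range z) = ⊤ →
      gcnt N X H z + ∑ K ∈ Finset.univ.filter (· < H), gcnt N X K z
        = Nat.card (H ⊓ N : Subgroup G) ^ n := by
    intro z hz
    have h0 := gcnt_sum N X H hXH z
    rw [hsplit, Finset.sum_insert hnm, gcnt_box N H hHN z] at h0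
    exact h0
  have hsum : ∑ K ∈ Finset.univ.filter (· < H), gcnt N X K y
      = ∑ K ∈ Finset.univ.filter (· < H), gcnt N X K y' := by
    apply Finset.sum_congr rfl
    intro K hK
    rw [Finset.mem_filter] at hK
    by_cases hgood : X ⊆ K ∧ N ⊔ K = ⊤
    · exact IH K hK.2 hgood.1 hgood.2
    · rw [gcnt_eq_zero N X y hy K hgood, gcnt_eq_zero N X y' hy' K hgood]
  have := (heq y hy).trans (heq y' hy').symm
  omega

end Aux

/-- Gaschütz's lemma, extended form: if `G = N⟨X, y₁,…,y_n⟩` with `N ⊴ G` and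
`n ≥ d(G)`, then there are `a₁,…,a_n ∈ N` with `G = ⟨X, a₁y₁,…,a_ny_n⟩`. -/
theorem gaschuetz_extended {G : Type*} [Group G] [Finite G]
    (N : Subgroup G) [N.Normal] (X : Set G) (n : ℕ) (y : Fin n → G)
    (hd : ∃ D : Finset G, D.card ≤ n ∧ Subgroup.closure (D : Set G) = ⊤)
    (hgen : N ⊔ Subgroup.closure (X ∪ Set.range y) = ⊤) :
    ∃ a : Fin n → G, (∀ i, a i ∈ N) ∧
      Subgroup.closure (X ∪ Set.range (fun i => a i * y i)) = ⊤ := by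
  classical
  cases nonempty_fintype G
  obtain ⟨D, hDcard, hDgen⟩ := hd
  -- build y' from D
  set l : List G := D.toList with hl
  have hlen : l.length ≤ n := by rw [hl, Finset.length_toList]; exact hDcard
  set y' : Fin n → G := fun i => l.getD i 1 with hy'def
  have hDsub : (D : Set G) ⊆ Set.range y' := by
    intro d hd
    have hdl : d ∈ l := by rwa [hl, Finset.mem_toList, ← Finset.mem_coe]
    obtain ⟨j, hj, hget⟩ := List.getElem_of_mem hdl
    refine ⟨⟨j, lt_of_lt_of_le hj hlen⟩, ?_⟩
    simp only [hy'def]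
    rw [List.getD_eq_getElem l 1 hj]
    exact hget
  have hy'gen : Subgroup.closure (X ∪ Set.range y') = ⊤ := by
    rw [eq_top_iff, ← hDgen]
    exact Subgroup.closure_mono (hDsub.trans Set.subset_union_right)
  have hy' : N ⊔ Subgroup.closure (X ∪ Set.range y') = ⊤ := by
    rw [hy'gen, sup_top_eq]
  have hpos : 0 < gcnt N X ⊤ y' := by
    rw [gcnt, Finset.card_pos]
    refine ⟨fun _ => 1, ?_⟩
    rw [Finset.mem_filter]
    refine ⟨Finset.mem_univ _, fun i => one_mem N, ?_⟩
    simpa using hy'gen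
  have hkey := gcnt_key N X y y' hgen hy' ⊤ (by simp) (sup_top_eq N)
  have hposy : 0 < gcnt N X ⊤ y := by rw [hkey]; exact hpos
  rw [gcnt, Finset.card_pos] at hposy
  have this := hposy
  obtain ⟨a, ha⟩ := this
  rw [Finset.mem_filter] at ha
  exact ⟨a, ha.2.1, ha.2.2⟩
end
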